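/- Let Λ be a countable finitely aligned category of paths and let α, β ∈ Λ with α ≠ β, s(α) = s(β), and r(α) = r(β). Then Λ has {α,β}-periodicity (i.e., αγ ⋔ βγ for every γ ∈ s(α)Λ) if and only if αx = βx for every x ∈ s(α)∂Λ, where s(α)∂Λ = ∂Λ ∩ s(α)Λ*. -/

import Mathlib

universe u v

/-- A category of paths: a small category (objects identified with identity
morphisms) with left and right cancellation and no inverses. -/
structure CategoryOfPaths (Λ : Type u) where
  s : Λ → Λ
  r : Λ → Λ
  comp : Λ → Λ → Λ
  s_comp : ∀ {α β : Λ}, s α = r β → s (comp α β) = s β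
  r_comp : ∀ {α β : Λ}, s α = r β → r (comp α β) = r α
  comp_assoc : ∀ {α β γ : Λ}, s α = r β → s β = r γ →
    comp (comp α β) γ = comp α (comp β γ)
  id_comp : ∀ α : Λ, comp (r α) α = α
  comp_id : ∀ α : Λ, comp α (s α) = α
  s_r : ∀ α : Λ, s (r α) = r α
  r_r : ∀ α : Λ, r (r α) = r α
  r_s : ∀ α : Λ, r (s α) = s α
  s_s : ∀ α : Λ, s (s α) = s α
  left_cancel : ∀ {α β γ : Λ}, s α = r β → s α = r γ → comp α β = comp α γ → β = γ
  right_cancel : ∀ {β γ α : Λ}, s β = r α → s γ = r α → comp β α = comp γ α → β = γ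
  no_inverses : ∀ {α β : Λ}, s α = r β → comp α β = s β → α = s β ∧ β = s β

variable {Λ : Type u}

/-- The tail set `αΛ`. -/
def pTail (C : CategoryOfPaths Λ) (α : Λ) : Set Λ :=
  {x | ∃ β, C.s α = C.r β ∧ x = C.comp α β}

/-- `vΛ`, the paths with range `v`. -/
def pRng (C : CategoryOfPaths Λ) (w : Λ) : Set Λ := {α | C.r α = w}

/-- `Λv`, the paths with source `v`. -/
def pSrc (C : CategoryOfPaths Λ) (w : Λ) : Set Λ := {α | C.s α = w}

/-- `[β]`, the initial segments of `β`. -/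
def pSeg (C : CategoryOfPaths Λ) (β : Λ) : Set Λ := {α | β ∈ pTail C α}

/-- `α ⋔ β`. -/
def pMeets (C : CategoryOfPaths Λ) (α β : Λ) : Prop :=
  (pTail C α ∩ pTail C β).Nonempty

/-- `αE`. -/
def pMulSet (C : CategoryOfPaths Λ) (α : Λ) (E : Set Λ) : Set Λ :=
  {x | ∃ β ∈ E, C.s α = C.r β ∧ x = C.comp α β}

/-- `σ^α(E ∩ αΛ)`, computed inside an ambient subcategory `S`. -/
def pShiftIn (C : CategoryOfPaths Λ) (S : Set Λ) (α : Λ) (E : Set Λ) : Set Λ :=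
  {β | β ∈ S ∧ C.s α = C.r β ∧ C.comp α β ∈ E}

/-- `σ^α(E ∩ αΛ)`. -/
def pShift (C : CategoryOfPaths Λ) (α : Λ) (E : Set Λ) : Set Λ :=
  {β | C.s α = C.r β ∧ C.comp α β ∈ E}

/-- `⋁F`: the minimal common extensions of `F`. -/
def pMinExt (C : CategoryOfPaths Λ) (F : Set Λ) : Set Λ :=
  {ε | (∀ α ∈ F, ε ∈ pTail C α) ∧
    ∀ γ, (∀ α ∈ F, γ ∈ pTail C α) → ε ∈ pTail C γ → γ = ε}

/-- `α ∨ β`: the minimal common extensions of `α` and `β`. -/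
def pMinCE (C : CategoryOfPaths Λ) (α β : Λ) : Set Λ := pMinExt C {α, β}

/-- A subcategory of a category of paths, as a set of morphisms. -/
structure IsSubcategory (C : CategoryOfPaths Λ) (Λ₀ : Set Λ) : Prop where
  comp_mem : ∀ {α β : Λ}, α ∈ Λ₀ → β ∈ Λ₀ → C.s α = C.r β → C.comp α β ∈ Λ₀
  s_mem : ∀ {α : Λ}, α ∈ Λ₀ → C.s α ∈ Λ₀
  r_mem : ∀ {α : Λ}, α ∈ Λ₀ → C.r α ∈ Λ₀

/-- A finitely aligned category of paths. -/
def FinitelyAligned (C : CategoryOfPaths Λ) : Prop :=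
  ∀ α β : Λ, ∃ G : Set Λ, G.Finite ∧
    pTail C α ∩ pTail C β = ⋃ ε ∈ G, pTail C ε

/-- A finitely aligned relative category of paths `(Λ₀, Λ)`. -/
def RelFinitelyAligned (C : CategoryOfPaths Λ) (Λ₀ : Set Λ) : Prop :=
  (∀ α ∈ Λ₀, ∀ β ∈ Λ₀, ∃ G : Set Λ, G.Finite ∧ G ⊆ Λ₀ ∧
      pTail C α ∩ pTail C β = ⋃ ε ∈ G, pTail C ε) ∧
  (∀ α ∈ Λ₀, pTail C α ∩ Λ₀ = pMulSet C α Λ₀)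

/-- A ring of sets: contains `∅` and is closed under `∪`, `∩`, and `\`. -/
def IsSetRing {γ : Type v} (R : Set (Set γ)) : Prop :=
  ∅ ∈ R ∧ (∀ E ∈ R, ∀ F ∈ R, E ∪ F ∈ R) ∧ (∀ E ∈ R, ∀ F ∈ R, E ∩ F ∈ R) ∧
    (∀ E ∈ R, ∀ F ∈ R, E \ F ∈ R)

/-- A ring of sets on `S`: a ring of sets all of whose members are subsets of `S`. -/
def IsSetRingOn {γ : Type v} (S : Set γ) (R : Set (Set γ)) : Prop :=
  IsSetRing R ∧ ∀ E ∈ R, E ⊆ S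

/-- The ring of sets generated by a collection. -/
def setRingGen {γ : Type v} (G : Set (Set γ)) : Set (Set γ) :=
  ⋂₀ {R | IsSetRing R ∧ G ⊆ R}

/-- The ring of sets on `S` generated by a collection. -/
def setRingGenOn {γ : Type v} (S : Set γ) (G : Set (Set γ)) : Set (Set γ) :=
  ⋂₀ {R | IsSetRingOn S R ∧ G ⊆ R}

/-- A zigzag: a list of pairs `(αᵢ, βᵢ)` with `r αᵢ = r βᵢ` and `s αᵢ₊₁ = s βᵢ`. -/
def IsZigzag (C : CategoryOfPaths Λ) (l : List (Λ × Λ)) : Prop :=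
  (∀ p ∈ l, C.r p.1 = C.r p.2) ∧ l.Chain' (fun p q => C.s q.1 = C.s p.2)

/-- The (graph of the) zigzag map `φ_ζ = σ^{α₁} β₁ ⋯ σ^{αₙ} βₙ`, computed
inside an ambient subcategory `S`. -/
def zigzagRelIn (C : CategoryOfPaths Λ) (S : Set Λ) : List (Λ × Λ) → Λ → Λ → Prop
  | [], x, y => x = y ∧ x ∈ S
  | p :: rest, x, y => ∃ z, zigzagRelIn C S rest x z ∧ C.s p.2 = C.r z ∧
      C.s p.1 = C.r y ∧ y ∈ S ∧ C.comp p.2 z = C.comp p.1 y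

/-- `A(ζ)`: the domain of the zigzag map. -/
def zigzagDomIn (C : CategoryOfPaths Λ) (S : Set Λ) (l : List (Λ × Λ)) : Set Λ :=
  {x | ∃ y, zigzagRelIn C S l x y}

/-- `𝒟(Λ₀,Λ)⁰_v`: nonempty zigzag sets with entries in `Λ₀` and source `v`,
computed inside the ambient subcategory `S`. -/
def relD0 (C : CategoryOfPaths Λ) (Λ₀ S : Set Λ) (w : Λ) : Set (Set Λ) :=
  {E | E.Nonempty ∧ ∃ (l : List (Λ × Λ)) (h : l ≠ []),
    IsZigzag C l ∧ (∀ p ∈ l, p.1 ∈ Λ₀ ∧ p.2 ∈ Λ₀) ∧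
    C.s (l.getLast h).2 = w ∧ E = zigzagDomIn C S l}

/-- `𝒜(Λ₀,Λ)_v`: the ring of sets generated by the zigzag sets. -/
def relAring (C : CategoryOfPaths Λ) (Λ₀ S : Set Λ) (w : Λ) : Set (Set Λ) :=
  setRingGenOn {α | α ∈ S ∧ C.r α = w} (relD0 C Λ₀ S w)

/-- A filter in a ring of sets. -/
def IsFilterIn {γ : Type v} (R U : Set (Set γ)) : Prop :=
  U.Nonempty ∧ U ⊆ R ∧ (∀ E ∈ U, E.Nonempty) ∧
    (∀ E ∈ U, ∀ F ∈ U, E ∩ F ∈ U) ∧ (∀ E ∈ U, ∀ F ∈ R, E ⊆ F → F ∈ U)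

/-- An ultrafilter in a ring of sets: a maximal filter. -/
def IsUltrafilterIn {γ : Type v} (R U : Set (Set γ)) : Prop :=
  IsFilterIn R U ∧ ∀ V, IsFilterIn R V → U ⊆ V → V = U

/-- A filter base in a ring of sets. -/
def IsFilterBaseIn {γ : Type v} (R B : Set (Set γ)) : Prop :=
  B.Nonempty ∧ B ⊆ R ∧ (∀ E ∈ B, E.Nonempty) ∧
    ∀ E ∈ B, ∀ F ∈ B, ∃ G ∈ B, G ⊆ E ∩ F

/-- The filter generated by a filter base. -/
def filterGenBy {γ : Type v} (R B : Set (Set γ)) : Set (Set γ) :=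
  {E | E ∈ R ∧ ∃ F ∈ B, F ⊆ E}

/-- An ultrafilter base in a ring of sets. -/
def IsUltrafilterBaseIn {γ : Type v} (R B : Set (Set γ)) : Prop :=
  IsFilterBaseIn R B ∧ IsUltrafilterIn R (filterGenBy R B)

/-- A Boolean ring homomorphism defined on a ring of sets `A` with values in a
generalized Boolean algebra. -/
def IsBRHomOn {γ : Type v} {R : Type*} [GeneralizedBooleanAlgebra R]
    (A : Set (Set γ)) (ν : Set γ → R) : Prop :=
  ν ∅ = ⊥ ∧ (∀ E ∈ A, ∀ F ∈ A, ν (E ∪ F) = ν E ⊔ ν F) ∧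
    (∀ E ∈ A, ∀ F ∈ A, ν (E ∩ F) = ν E ⊓ ν F) ∧
    (∀ E ∈ A, ∀ F ∈ A, ν (E \ F) = ν E \ ν F)

/-- `𝒜_v`: the ring of sets on `vΛ` generated by the tail sets. -/
def tailRing (C : CategoryOfPaths Λ) (w : Λ) : Set (Set Λ) :=
  setRingGenOn (pRng C w) {E | ∃ α, C.r α = w ∧ E = pTail C α}

/-- A directed subset. -/
def pDirected (C : CategoryOfPaths Λ) (x : Set Λ) : Prop :=
  ∀ α ∈ x, ∀ β ∈ x, (pTail C α ∩ pTail C β ∩ x).Nonempty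

/-- A hereditary subset. -/
def pHereditary (C : CategoryOfPaths Λ) (x : Set Λ) : Prop :=
  ∀ γ ∈ x, ∀ α : Λ, γ ∈ pTail C α → α ∈ x

/-- `vΛ*`: the nonempty directed hereditary subsets of `vΛ`. -/
def lamStar (C : CategoryOfPaths Λ) (w : Λ) : Set (Set Λ) :=
  {x | x.Nonempty ∧ x ⊆ pRng C w ∧ pDirected C x ∧ pHereditary C x}

/-- `vΛ**`: the maximal directed subsets of `vΛ`. -/
def lamStarStar (C : CategoryOfPaths Λ) (w : Λ) : Set (Set Λ) :=
  {x | x ⊆ pRng C w ∧ pDirected C x ∧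
    ∀ y, y ⊆ pRng C w → pDirected C y → x ⊆ y → y = x}

/-- `αx = ⋃_{γ ∈ x} [αγ]` for `x ∈ s(α)Λ*`. -/
def pMulStar (C : CategoryOfPaths Λ) (α : Λ) (x : Set Λ) : Set Λ :=
  {δ | ∃ γ ∈ x, C.s α = C.r γ ∧ C.comp α γ ∈ pTail C δ}

/-- `𝒰_{C,0}`. -/
def UC0 (C : CategoryOfPaths Λ) (w : Λ) (x : Set Λ) : Set (Set Λ) :=
  {E | E ∈ tailRing C w ∧ ∃ α ∈ x, pTail C α ⊆ E}

/-- `𝒰_C`. -/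
def UC (C : CategoryOfPaths Λ) (w : Λ) (x : Set Λ) : Set (Set Λ) :=
  {E | E ∈ tailRing C w ∧ ∃ α ∈ x, x ∩ pTail C α ⊆ E}

/-- `X_v = vΛ*` as a type. -/
abbrev Xv (C : CategoryOfPaths Λ) (w : Λ) : Type u := {x : Set Λ // x ∈ lamStar C w}

/-- The topology on `X_v` generated by the sets `Ê`, `E ∈ 𝒜_v`. -/
def XvTop (C : CategoryOfPaths Λ) (w : Λ) : TopologicalSpace (Xv C w) :=
  TopologicalSpace.generateFrom
    {t | ∃ E ∈ tailRing C w, t = {x : Xv C w | E ∈ UC C w x.1}}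

/-- The vertices of `Λ`. -/
abbrev Vertex (C : CategoryOfPaths Λ) : Type u := {w : Λ // C.r w = w}

/-- `X`: the disjoint union of the spaces `X_v`. -/
abbrev Xtotal (C : CategoryOfPaths Λ) : Type u := Σ w : Vertex C, Xv C w.1

/-- The disjoint union topology on `X`. -/
def XtotalTop (C : CategoryOfPaths Λ) : TopologicalSpace (Xtotal C) :=
  letI : ∀ w : Vertex C, TopologicalSpace (Xv C w.1) := fun w => XvTop C w.1
  inferInstance

/-- The boundary `∂Λ`: the closure of `Λ**` in `X`. -/
def boundarySet (C : CategoryOfPaths Λ) : Set (Xtotal C) :=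
  @closure _ (XtotalTop C) {p : Xtotal C | p.2.1 ∈ lamStarStar C p.1.1}

/-- An exhaustive subset of `vΛ`. -/
def ExhaustiveAt (C : CategoryOfPaths Λ) (w : Λ) (F : Set Λ) : Prop :=
  ∀ α, C.r α = w → ∃ β ∈ F, pMeets C α β

/-- An aperiodic point of `Λ*`. -/
def pAperiodic (C : CategoryOfPaths Λ) (x : Set Λ) : Prop :=
  ∀ α ∈ x, ∀ β ∈ x, α ≠ β → pShift C α x ≠ pShift C β x

/-- A right-aperiodic point of `wΛ*`. -/
def pRightAperiodicAt (C : CategoryOfPaths Λ) (w : Λ) (x : Set Λ) : Prop :=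
  ∀ α β : Λ, C.s α = w → C.s β = w → α ≠ β → pMulStar C α x ≠ pMulStar C β x

/-- The triples `(α, β, x)` with `s α = s β` and `x ∈ s(α)Λ*`. -/
abbrev pTrip (C : CategoryOfPaths Λ) : Type u :=
  {t : Λ × Λ × Set Λ // C.s t.1 = C.s t.2.1 ∧ t.2.2 ∈ lamStar C (C.s t.1)}

/-- The groupoid equivalence relation on triples. -/
def tripRel (C : CategoryOfPaths Λ) (t t' : pTrip C) : Prop :=
  ∃ (z : Set Λ) (δ δ' : Λ),
    z ∈ lamStar C (C.s δ) ∧ z ∈ lamStar C (C.s δ') ∧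
    C.s t.1.1 = C.r δ ∧ C.s t'.1.1 = C.r δ' ∧
    t.1.2.2 = pMulStar C δ z ∧ t'.1.2.2 = pMulStar C δ' z ∧
    C.comp t.1.1 δ = C.comp t'.1.1 δ' ∧
    C.comp t.1.2.1 δ = C.comp t'.1.2.1 δ'

/-- The ultrafilter space of `𝒜(Λ₀,Λ)_v`. -/
abbrev relXv (C : CategoryOfPaths Λ) (Λ₀ : Set Λ) (w : Λ) : Type u :=
  {U : Set (Set Λ) // IsUltrafilterIn (relAring C Λ₀ Set.univ w) U}

/-- The topology on the ultrafilter space of `𝒜(Λ₀,Λ)_v` generated by the `Ê`. -/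
def relXvTop (C : CategoryOfPaths Λ) (Λ₀ : Set Λ) (w : Λ) :
    TopologicalSpace (relXv C Λ₀ w) :=
  TopologicalSpace.generateFrom
    {t | ∃ E ∈ relAring C Λ₀ Set.univ w, t = {U : relXv C Λ₀ w | E ∈ U.1}}

section Aux
variable {Λ : Type u}

namespace CategoryOfPaths

variable (C : CategoryOfPaths Λ)

lemma mem_pTail_comp {α β : Λ} (h : C.s α = C.r β) : C.comp α β ∈ pTail C α :=
  ⟨β, h, rfl⟩

lemma mem_pTail_self (α : Λ) : α ∈ pTail C α :=
  ⟨C.s α, (C.r_s α).symm, (C.comp_id α).symm⟩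

lemma r_eq_of_mem_pTail {x α : Λ} (h : x ∈ pTail C α) : C.r x = C.r α := by
  obtain ⟨β, h1, rfl⟩ := h; exact C.r_comp h1

lemma pTail_trans {γ β α : Λ} (h1 : β ∈ pTail C α) (h2 : γ ∈ pTail C β) :
    γ ∈ pTail C α := by
  obtain ⟨ρ, hρ, rfl⟩ := h1
  obtain ⟨σ, hσ, rfl⟩ := h2
  have hσ' : C.s ρ = C.r σ := by rw [← C.s_comp hρ]; exact hσ
  refine ⟨C.comp ρ σ, ?_, ?_⟩
  · rw [C.r_comp hσ', ← hρ]
  · exact C.comp_assoc hρ hσ'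

lemma pTail_subset {β α : Λ} (h : β ∈ pTail C α) : pTail C β ⊆ pTail C α :=
  fun _ hx => C.pTail_trans h hx

/-- extract a common extension from directedness -/
lemma directed_pair {y : Set Λ} (h : pDirected C y) {a b : Λ} (ha : a ∈ y) (hb : b ∈ y) :
    ∃ w ∈ y, w ∈ pTail C a ∧ w ∈ pTail C b := by
  obtain ⟨w, hw⟩ := h a ha b hb
  exact ⟨w, hw.2, hw.1.1, hw.1.2⟩

lemma directed_triple {y : Set Λ} (h : pDirected C y) {a b c : Λ} (ha : a ∈ y) (hb : b ∈ y)
    (hc : c ∈ y) : ∃ w ∈ y, w ∈ pTail C a ∧ w ∈ pTail C b ∧ w ∈ pTail C c := by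
  obtain ⟨w1, hw1, h1a, h1b⟩ := C.directed_pair h ha hb
  obtain ⟨w, hw, hwa, hwc⟩ := C.directed_pair h hw1 hc
  exact ⟨w, hw, C.pTail_trans h1a hwa, C.pTail_trans h1b hwa, hwc⟩

/-- a maximal directed set is hereditary -/
lemma maximal_hereditary {w : Λ} {y : Set Λ} (hy : y ∈ lamStarStar C w) :
    pHereditary C y := by
  obtain ⟨hsub, hdir, hmax⟩ := hy
  intro δ hδ δ₀ hδ₀
  have key : y ∪ {δ₀} = y := by
    apply hmax
    · intro a ha
      rcases ha with ha | ha
      · exact hsub ha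
      · rcases ha
        show C.r δ₀ = w
        rw [← C.r_eq_of_mem_pTail hδ₀]
        exact hsub hδ
    · intro a ha b hb
      have key2 : ∀ a ∈ y ∪ ({δ₀} : Set Λ), ∃ w' ∈ y, w' ∈ pTail C a := by
        intro a ha
        rcases ha with ha | ha
        · obtain ⟨w', hw', hwa, _⟩ := C.directed_pair hdir ha hδ
          exact ⟨w', hw', hwa⟩
        · rcases ha; exact ⟨δ, hδ, hδ₀⟩
      obtain ⟨wa, hwa, hwa'⟩ := key2 a ha
      obtain ⟨wb, hwb, hwb'⟩ := key2 b hb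
      obtain ⟨w', hw', h1, h2⟩ := C.directed_pair hdir hwa hwb
      exact ⟨w', ⟨⟨C.pTail_trans hwa' h1, C.pTail_trans hwb' h2⟩, Or.inl hw'⟩⟩
    · exact Set.subset_union_left
  have : δ₀ ∈ y ∪ {δ₀} := Or.inr rfl
  rwa [key] at this

/-- the vertex belongs to any maximal directed set -/
lemma maximal_vert_mem {w : Λ} (hw : C.r w = w) {y : Set Λ} (hy : y ∈ lamStarStar C w) :
    w ∈ y := by
  obtain ⟨hsub, hdir, hmax⟩ := hy
  have hsw : C.s w = w := by conv_lhs => rw [← hw]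
                             rw [C.s_r, hw]
  have hmem : ∀ a : Λ, C.r a = w → a ∈ pTail C w := by
    intro a ha
    refine ⟨a, by rw [hsw, ha], ?_⟩
    conv_lhs => rw [← C.id_comp a]
    rw [ha]
  have key : y ∪ {w} = y := by
    apply hmax
    · intro a ha
      rcases ha with ha | ha
      · exact hsub ha
      · rcases ha; exact hw
    · intro a ha b hb
      rcases ha with ha | ha <;> rcases hb with hb | hb
      · obtain ⟨w', hw', h1, h2⟩ := C.directed_pair hdir ha hb
        exact ⟨w', ⟨⟨h1, h2⟩, Or.inl hw'⟩⟩
      · rcases hb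
        exact ⟨a, ⟨⟨C.mem_pTail_self a, hmem a (hsub ha)⟩, Or.inl ha⟩⟩
      · rcases ha
        exact ⟨b, ⟨⟨hmem b (hsub hb), C.mem_pTail_self b⟩, Or.inl hb⟩⟩
      · rcases ha; rcases hb
        exact ⟨w, ⟨⟨hmem w hw, hmem w hw⟩, Or.inr rfl⟩⟩
    · exact Set.subset_union_left
  have : w ∈ y ∪ {w} := Or.inr rfl
  rwa [key] at this

end CategoryOfPaths
end Aux
section Aux2
variable {Λ : Type u}
namespace CategoryOfPaths
variable (C : CategoryOfPaths Λ)

lemma comp_tail_mono {α γ ξ : Λ} (h : C.s α = C.r γ) (hξ : ξ ∈ pTail C γ) :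
    C.comp α ξ ∈ pTail C (C.comp α γ) := by
  obtain ⟨ρ, hρ, rfl⟩ := hξ
  have h1 : C.s (C.comp α γ) = C.r ρ := by rw [C.s_comp h]; exact hρ
  rw [← C.comp_assoc h hρ]
  exact C.mem_pTail_comp h1

/-- the σ-shift of a maximal directed set is maximal -/
lemma shift_maximal {v γ : Λ} {y : Set Λ} (hy : y ∈ lamStarStar C v) (hγ : γ ∈ y) :
    {ε | C.s γ = C.r ε ∧ C.comp γ ε ∈ y} ∈ lamStarStar C (C.s γ) := by
  obtain ⟨hsub, hdir, hmax⟩ := hy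
  set z : Set Λ := {ε | C.s γ = C.r ε ∧ C.comp γ ε ∈ y} with hz
  refine ⟨?_, ?_, ?_⟩
  · intro ε hε; exact hε.1.symm
  · rintro ε ⟨hε1, hε2⟩ ε' ⟨hε'1, hε'2⟩
    obtain ⟨ξ, hξy, hξ1, hξ2⟩ := C.directed_pair hdir hε2 hε'2
    obtain ⟨κ, hκ, hκe⟩ := hξ1
    rw [C.s_comp hε1] at hκ
    obtain ⟨κ', hκ', hκ'e⟩ := hξ2
    rw [C.s_comp hε'1] at hκ'
    have hμr : C.s γ = C.r (C.comp ε κ) := by rw [C.r_comp hκ]; exact hε1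
    have hcomp : C.comp γ (C.comp ε κ) = ξ := by
      rw [← C.comp_assoc hε1 hκ, ← hκe]
    have hcancel : C.comp ε κ = C.comp ε' κ' := by
      apply C.left_cancel hμr _ _
      · rw [C.r_comp hκ']; exact hε'1
      · rw [hcomp, hκ'e, C.comp_assoc hε'1 hκ']
    refine ⟨C.comp ε κ, ⟨⟨C.mem_pTail_comp hκ, ?_⟩, ⟨hμr, hcomp ▸ hξy⟩⟩⟩
    rw [hcancel]; exact C.mem_pTail_comp hκ'
  · intro z' hz'sub hz'dir hzz'
    have hmemz : ∀ ε ∈ z', C.s γ = C.r ε := fun ε hε => (hz'sub hε).symm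
    have hy' : y ∪ (fun ε => C.comp γ ε) '' z' = y := by
      apply hmax
      · rintro a (ha | ⟨ε, hε, rfl⟩)
        · exact hsub ha
        · show C.r (C.comp γ ε) = v
          rw [C.r_comp (hmemz ε hε)]; exact hsub hγ
      · -- directedness of y'
        have key : ∀ a ∈ y, ∀ ε ∈ z', ∃ τ, (τ ∈ pTail C a ∧ τ ∈ pTail C (C.comp γ ε)) ∧
            τ ∈ y ∪ (fun ε => C.comp γ ε) '' z' := by
          intro a ha ε hε
          obtain ⟨ξ, hξy, hξa, hξγ⟩ := C.directed_pair hdir ha hγ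
          obtain ⟨κ, hκ, hκe⟩ := hξγ
          have hκz : κ ∈ z := ⟨hκ, hκe ▸ hξy⟩
          obtain ⟨μ, hμz', hμκ, hμε⟩ := C.directed_pair hz'dir (hzz' hκz) hε
          have hμr : C.s γ = C.r μ := hmemz μ hμz'
          refine ⟨C.comp γ μ, ⟨?_, C.comp_tail_mono (hmemz ε hε) hμε⟩,
            Or.inr ⟨μ, hμz', rfl⟩⟩
          have : C.comp γ μ ∈ pTail C (C.comp γ κ) := C.comp_tail_mono hκ hμκ
          rw [← hκe] at this
          exact C.pTail_trans hξa this
        rintro a (ha | ⟨ε, hε, rfl⟩) b (hb | ⟨ε', hε', rfl⟩)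
        · obtain ⟨w', hw', h1, h2⟩ := C.directed_pair hdir ha hb
          exact ⟨w', ⟨⟨h1, h2⟩, Or.inl hw'⟩⟩
        · obtain ⟨τ, ⟨h1, h2⟩, h3⟩ := key a ha ε' hε'
          exact ⟨τ, ⟨⟨h1, h2⟩, h3⟩⟩
        · obtain ⟨τ, ⟨h1, h2⟩, h3⟩ := key b hb ε hε
          exact ⟨τ, ⟨⟨h2, h1⟩, h3⟩⟩
        · obtain ⟨μ, hμz', hμ1, hμ2⟩ := C.directed_pair hz'dir hε hε'
          exact ⟨C.comp γ μ, ⟨⟨C.comp_tail_mono (hmemz ε hε) hμ1,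
            C.comp_tail_mono (hmemz ε' hε') hμ2⟩, Or.inr ⟨μ, hμz', rfl⟩⟩⟩
      · exact Set.subset_union_left
    apply Set.Subset.antisymm _ hzz'
    intro ε hε
    have : C.comp γ ε ∈ y := by
      rw [← hy']; exact Or.inr ⟨ε, hε, rfl⟩
    exact ⟨hmemz ε hε, this⟩

/-- multiplication preserves maximality -/
lemma mulStar_maximal {α : Λ} {y : Set Λ} (hy : y ∈ lamStarStar C (C.s α)) :
    pMulStar C α y ∈ lamStarStar C (C.r α) := by
  obtain ⟨hsub, hdir, hmax⟩ := hy
  have hmemy : ∀ a ∈ y, C.s α = C.r a := fun a ha => (hsub ha).symm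
  have hαA : α ∈ pMulStar C α y := by
    have hv : C.s α ∈ y := C.maximal_vert_mem (C.r_s α) ⟨hsub, hdir, hmax⟩
    exact ⟨C.s α, hv, (C.r_s α).symm, by rw [C.comp_id]; exact C.mem_pTail_self α⟩
  refine ⟨?_, ?_, ?_⟩
  · rintro δ ⟨γ, hγ, hsr, ht⟩
    show C.r δ = C.r α
    rw [← C.r_eq_of_mem_pTail ht, C.r_comp hsr]
  · rintro δ ⟨γ₁, hγ₁, h1, ht1⟩ δ' ⟨γ₂, hγ₂, h2, ht2⟩
    obtain ⟨ξ, hξ, hξ1, hξ2⟩ := C.directed_pair hdir hγ₁ hγ₂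
    refine ⟨C.comp α ξ, ⟨⟨C.pTail_trans ht1 (C.comp_tail_mono h1 hξ1),
      C.pTail_trans ht2 (C.comp_tail_mono h2 hξ2)⟩,
      ⟨ξ, hξ, hmemy ξ hξ, C.mem_pTail_self _⟩⟩⟩
  · intro z hzsub hzdir hAz
    have hw : y ∪ {η | C.s α = C.r η ∧ C.comp α η ∈ z} = y := by
      apply hmax
      · rintro a (ha | ⟨h1, _⟩)
        · exact hsub ha
        · exact h1.symm
      · have hprop : ∀ a ∈ y ∪ {η | C.s α = C.r η ∧ C.comp α η ∈ z},
            C.s α = C.r a ∧ C.comp α a ∈ z := by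
          rintro a (ha | ⟨h1, h2⟩)
          · exact ⟨hmemy a ha, hAz ⟨a, ha, hmemy a ha, C.mem_pTail_self _⟩⟩
          · exact ⟨h1, h2⟩
        intro a ha b hb
        obtain ⟨ha1, ha2⟩ := hprop a ha
        obtain ⟨hb1, hb2⟩ := hprop b hb
        obtain ⟨ζ, hζz, hζa, hζb⟩ := C.directed_pair hzdir ha2 hb2
        obtain ⟨κ, hκ, hκe⟩ := hζa
        rw [C.s_comp ha1] at hκ
        obtain ⟨κ', hκ', hκ'e⟩ := hζb
        rw [C.s_comp hb1] at hκ'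
        have hr1 : C.s α = C.r (C.comp a κ) := by rw [C.r_comp hκ]; exact ha1
        have hce : C.comp α (C.comp a κ) = ζ := by rw [← C.comp_assoc ha1 hκ, ← hκe]
        have hcancel : C.comp a κ = C.comp b κ' := by
          apply C.left_cancel hr1 _ _
          · rw [C.r_comp hκ']; exact hb1
          · rw [hce, hκ'e, C.comp_assoc hb1 hκ']
        refine ⟨C.comp a κ, ⟨⟨C.mem_pTail_comp hκ, ?_⟩, Or.inr ⟨hr1, hce ▸ hζz⟩⟩⟩
        rw [hcancel]; exact C.mem_pTail_comp hκ'
      · exact Set.subset_union_left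
    apply Set.Subset.antisymm _ hAz
    intro ρ hρ
    obtain ⟨ζ, hζz, hζρ, hζα⟩ := C.directed_pair hzdir hρ (hAz hαA)
    obtain ⟨η, hη, hηe⟩ := hζα
    have hηy : η ∈ y := by
      rw [← hw]; exact Or.inr ⟨hη, hηe ▸ hζz⟩
    exact ⟨η, hηy, hη, hηe ▸ hζρ⟩

end CategoryOfPaths
end Aux2
section Aux3
variable {Λ : Type u}
namespace CategoryOfPaths
variable (C : CategoryOfPaths Λ)

lemma exists_cofinal_seq [Countable Λ] {z : Set Λ} (hdir : pDirected C z)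
    (hne : z.Nonempty) : ∃ e : ℕ → Λ, (∀ k, e k ∈ z) ∧
      (∀ k, e (k + 1) ∈ pTail C (e k)) ∧ (∀ b ∈ z, ∃ k, e k ∈ pTail C b) := by
  obtain ⟨f, hf⟩ := (Set.to_countable z).exists_eq_range hne
  have hfz : ∀ n, f n ∈ z := fun n => hf ▸ Set.mem_range_self n
  choose g hg1 hg2 hg3 using fun (a : Λ) (ha : a ∈ z) (b : Λ) (hb : b ∈ z) =>
    C.directed_pair hdir ha hb
  let e' : ℕ → {x : Λ // x ∈ z} := fun n => Nat.rec ⟨f 0, hfz 0⟩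
    (fun k p => ⟨g p.1 p.2 (f (k + 1)) (hfz (k + 1)),
      hg1 p.1 p.2 (f (k + 1)) (hfz (k + 1))⟩) n
  refine ⟨fun n => (e' n).1, fun n => (e' n).2, fun k => hg2 _ _ _ _, ?_⟩
  intro b hb
  rw [hf] at hb
  obtain ⟨m, rfl⟩ := hb
  cases m with
  | zero => exact ⟨0, C.mem_pTail_self _⟩
  | succ k => exact ⟨k + 1, hg3 (e' k).1 (e' k).2 (f (k + 1)) (hfz (k + 1))⟩

lemma seq_mono {e : ℕ → Λ} (hch : ∀ k, e (k + 1) ∈ pTail C (e k)) :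
    ∀ j k, j ≤ k → e k ∈ pTail C (e j) := by
  intro j k hjk
  induction k with
  | zero => cases Nat.le_zero.mp hjk; exact C.mem_pTail_self _
  | succ n ih =>
    rcases Nat.lt_or_ge j (n + 1) with h | h
    · exact C.pTail_trans (ih (Nat.lt_succ_iff.mp h)) (hch n)
    · cases Nat.le_antisymm hjk h; exact C.mem_pTail_self _

/-- a maximal directed set meets every finite exhaustive set -/
lemma maximal_meets_exhaustive [Countable Λ] (hfa : FinitelyAligned C) {u : Λ}
    {z : Set Λ} (hu : C.r u = u) (hz : z ∈ lamStarStar C u) {G : Set Λ}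
    (hG : G.Finite)
    (hexh : ∀ ρ, C.r ρ = u → ∃ c ∈ G, (pTail C c ∩ pTail C ρ).Nonempty) :
    ∃ c ∈ G, (z ∩ pTail C c).Nonempty := by
  obtain ⟨hsub, hdir, hmax⟩ := hz
  have hne : z.Nonempty := ⟨u, C.maximal_vert_mem hu ⟨hsub, hdir, hmax⟩⟩
  obtain ⟨e, hez, hch, hcof⟩ := C.exists_cofinal_seq hdir hne
  have hmono := C.seq_mono hch
  have heu : ∀ k, C.r (e k) = u := fun k => hsub (hez k)
  -- a finite-pigeonhole helper
  have pigeon : ∀ (H : Set Λ), H.Finite →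
      (∀ k : ℕ, ∃ c ∈ H, (pTail C c ∩ pTail C (e k)).Nonempty) →
      ∃ c ∈ H, ∀ k, (pTail C c ∩ pTail C (e k)).Nonempty := by
    intro H hH hall
    by_contra hcon
    push_neg at hcon
    choose k hk using hcon
    classical
    set k' : Λ → ℕ := fun c => if hc : c ∈ H then k c hc else 0 with hk'
    obtain ⟨K, hK⟩ := (hH.image k').bddAbove
    obtain ⟨c, hc, w, hw1, hw2⟩ := hall K
    have h1 : k c hc ≤ K := by
      have : k' c ≤ K := hK ⟨c, hc, rfl⟩
      simpa [hk', dif_pos hc] using this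
    have hmem : w ∈ pTail C c ∩ pTail C (e (k c hc)) :=
      ⟨hw1, C.pTail_trans (hmono _ _ h1) hw2⟩
    rw [hk c hc] at hmem
    exact hmem
  have good : ∃ c ∈ G, ∀ k, (pTail C c ∩ pTail C (e k)).Nonempty :=
    pigeon G hG (fun k => hexh (e k) (heu k))
  obtain ⟨c, hcG, hc⟩ := good
  -- the step construction
  have step : ∀ τ : Λ, (∀ k, (pTail C τ ∩ pTail C (e k)).Nonempty) → ∀ m : ℕ,
      ∃ σ, σ ∈ pTail C τ ∧ σ ∈ pTail C (e m) ∧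
        ∀ k, (pTail C σ ∩ pTail C (e k)).Nonempty := by
    intro τ hτ m
    obtain ⟨G', hG', hGeq⟩ := hfa τ (e m)
    have hGsub : ∀ σ ∈ G', σ ∈ pTail C τ ∩ pTail C (e m) := by
      intro σ hσ
      rw [hGeq]
      exact Set.mem_biUnion hσ (C.mem_pTail_self σ)
    have hall : ∀ k : ℕ, ∃ σ ∈ G', (pTail C σ ∩ pTail C (e k)).Nonempty := by
      intro k
      obtain ⟨w, hw1, hw2⟩ := hτ (max m k)
      have hwm : w ∈ pTail C τ ∩ pTail C (e m) :=
        ⟨hw1, C.pTail_trans (hmono m (max m k) (le_max_left m k)) hw2⟩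
      rw [hGeq] at hwm
      obtain ⟨σ, hσ, hwσ⟩ := Set.mem_iUnion₂.mp hwm
      exact ⟨σ, hσ, w, hwσ,
        C.pTail_trans (hmono k (max m k) (le_max_right m k)) hw2⟩
    obtain ⟨σ, hσG', hσ⟩ := pigeon G' hG' hall
    exact ⟨σ, (hGsub σ hσG').1, (hGsub σ hσG').2, hσ⟩
  choose stp hstp1 hstp2 hstp3 using step
  let Good : Λ → Prop := fun τ => ∀ k, (pTail C τ ∩ pTail C (e k)).Nonempty
  let t' : ℕ → {p : Λ // Good p} := fun n => Nat.rec ⟨stp c hc 0, hstp3 c hc 0⟩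
    (fun k p => ⟨stp p.1 p.2 (k + 1), hstp3 p.1 p.2 (k + 1)⟩) n
  let t : ℕ → Λ := fun n => (t' n).1
  have ht0 : t 0 ∈ pTail C c := hstp1 c hc 0
  have hte : ∀ k, t k ∈ pTail C (e k) := by
    intro k
    cases k with
    | zero => exact hstp2 c hc 0
    | succ n => exact hstp2 (t' n).1 (t' n).2 (n + 1)
  have htch : ∀ k, t (k + 1) ∈ pTail C (t k) := fun k => hstp1 (t' k).1 (t' k).2 (k + 1)
  have htmono := C.seq_mono htch
  -- the enlarged directed set
  set z2 : Set Λ := z ∪ {δ | ∃ k, t k ∈ pTail C δ} with hz2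
  have hz2eq : z2 = z := by
    apply hmax
    · rintro δ (hδ | ⟨k, hk⟩)
      · exact hsub hδ
      · show C.r δ = u
        rw [← C.r_eq_of_mem_pTail hk, C.r_eq_of_mem_pTail (hte k), heu k]
    · have key : ∀ a ∈ z, ∀ k : ℕ, ∃ j, t j ∈ pTail C a ∧ t j ∈ pTail C (t k) := by
        intro a ha k
        obtain ⟨m, hm⟩ := hcof a ha
        refine ⟨max k m, ?_, htmono k (max k m) (le_max_left k m)⟩
        exact C.pTail_trans (C.pTail_trans hm (hmono m (max k m) (le_max_right k m)))
          (hte (max k m))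
      rintro a (ha | ⟨k, hk⟩) b (hb | ⟨k', hk'⟩)
      · obtain ⟨w, hw, h1, h2⟩ := C.directed_pair hdir ha hb
        exact ⟨w, ⟨⟨h1, h2⟩, Or.inl hw⟩⟩
      · obtain ⟨j, hj1, hj2⟩ := key a ha k'
        exact ⟨t j, ⟨⟨hj1, C.pTail_trans hk' hj2⟩, Or.inr ⟨j, C.mem_pTail_self _⟩⟩⟩
      · obtain ⟨j, hj1, hj2⟩ := key b hb k
        exact ⟨t j, ⟨⟨C.pTail_trans hk hj2, hj1⟩, Or.inr ⟨j, C.mem_pTail_self _⟩⟩⟩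
      · refine ⟨t (max k k'), ⟨⟨C.pTail_trans hk (htmono k _ (le_max_left k k')),
          C.pTail_trans hk' (htmono k' _ (le_max_right k k'))⟩,
          Or.inr ⟨max k k', C.mem_pTail_self _⟩⟩⟩
    · exact Set.subset_union_left
  have hcz : c ∈ z := by
    rw [← hz2eq]
    exact Or.inr ⟨0, ht0⟩
  exact ⟨c, hcG, c, hcz, C.mem_pTail_self c⟩

end CategoryOfPaths
end Aux3
section Aux4
variable {Λ : Type u}
namespace CategoryOfPaths
variable (C : CategoryOfPaths Λ)

lemma maximal_mulStar_eq [Countable Λ] (hfa : FinitelyAligned C) {α β : Λ}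
    (hs : C.s α = C.s β) (hr : C.r α = C.r β)
    (hper : ∀ γ, C.s α = C.r γ →
      (pTail C (C.comp α γ) ∩ pTail C (C.comp β γ)).Nonempty)
    {y : Set Λ} (hy : y ∈ lamStarStar C (C.s α)) :
    pMulStar C α y = pMulStar C β y := by
  classical
  have hyβ : y ∈ lamStarStar C (C.s β) := hs ▸ hy
  have hA := C.mulStar_maximal (α := α) hy
  have hB := C.mulStar_maximal (α := β) hyβ
  rw [← hr] at hB
  obtain ⟨hsuby, hdiry, hmaxy⟩ := hy
  -- the mixed directedness witness
  have mixed : ∀ δ ∈ pMulStar C α y, ∀ δ' ∈ pMulStar C β y,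
      ∃ w, (w ∈ pTail C δ ∧ w ∈ pTail C δ') ∧ w ∈ pMulStar C α y := by
    rintro δ ⟨γ₁, hγ₁, h1, ht1⟩ δ' ⟨γ₂, hγ₂, h2, ht2⟩
    obtain ⟨γ, hγy, hγ1, hγ2⟩ := C.directed_pair hdiry hγ₁ hγ₂
    have hαγ : C.s α = C.r γ := (hsuby hγy).symm
    have hβγ : C.s β = C.r γ := hs ▸ hαγ
    have hαγδ : C.comp α γ ∈ pTail C δ := C.pTail_trans ht1 (C.comp_tail_mono h1 hγ1)
    have hβγδ' : C.comp β γ ∈ pTail C δ' := C.pTail_trans ht2 (C.comp_tail_mono h2 hγ2)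
    -- finite alignment of αγ and βγ
    obtain ⟨G, hGfin, hGeq⟩ := hfa (C.comp α γ) (C.comp β γ)
    have hGmem : ∀ ε ∈ G, ε ∈ pTail C (C.comp α γ) ∩ pTail C (C.comp β γ) := by
      intro ε hε
      rw [hGeq]
      exact Set.mem_biUnion hε (C.mem_pTail_self ε)
    -- choice of the quotient paths
    set D : Λ → Λ := fun ε =>
      if h : ∃ b, C.s (C.comp α γ) = C.r b ∧ ε = C.comp (C.comp α γ) b
      then h.choose else ε with hD
    have hDspec : ∀ ε ∈ G, C.s (C.comp α γ) = C.r (D ε) ∧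
        ε = C.comp (C.comp α γ) (D ε) := by
      intro ε hε
      have h : ∃ b, C.s (C.comp α γ) = C.r b ∧ ε = C.comp (C.comp α γ) b :=
        (hGmem ε hε).1
      rw [hD]
      simp only [dif_pos h]
      exact h.choose_spec
    -- the shift of y along γ is maximal
    have hu : C.r (C.s γ) = C.s γ := C.r_s γ
    have hzmax := C.shift_maximal ⟨hsuby, hdiry, hmaxy⟩ hγy
    -- exhaustivity of the quotient paths
    have hexh : ∀ ρ, C.r ρ = C.s γ →
        ∃ dd ∈ D '' G, (pTail C dd ∩ pTail C ρ).Nonempty := by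
      intro ρ hρ
      have hγρ : C.s γ = C.r ρ := hρ.symm
      have hαγρ : C.s α = C.r (C.comp γ ρ) := by rw [C.r_comp hγρ]; exact hαγ
      obtain ⟨τ, hτ1, hτ2⟩ := hper (C.comp γ ρ) hαγρ
      rw [← C.comp_assoc hαγ hγρ] at hτ1
      rw [← C.comp_assoc hβγ hγρ] at hτ2
      have hραγ : C.s (C.comp α γ) = C.r ρ := by rw [C.s_comp hαγ]; exact hγρ
      have hτG : τ ∈ pTail C (C.comp α γ) ∩ pTail C (C.comp β γ) := by
        constructor
        · exact C.pTail_trans (C.mem_pTail_comp hραγ) hτ1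
        · have hρβγ : C.s (C.comp β γ) = C.r ρ := by rw [C.s_comp hβγ]; exact hγρ
          exact C.pTail_trans (C.mem_pTail_comp hρβγ) hτ2
      rw [hGeq] at hτG
      obtain ⟨ε, hεG, hτε⟩ := Set.mem_iUnion₂.mp hτG
      obtain ⟨hd1, hd2⟩ := hDspec ε hεG
      -- decompose τ two ways
      obtain ⟨κ, hκ, hκe⟩ := hτ1
      rw [C.s_comp hραγ] at hκ
      obtain ⟨σ, hσ, hσe⟩ := hτε
      have hσ' : C.s (D ε) = C.r σ := by
        rw [← C.s_comp hd1, ← hd2]; exact hσ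
      have hcancel : C.comp ρ κ = C.comp (D ε) σ := by
        apply C.left_cancel (α := C.comp α γ) _ _ _
        · rw [C.r_comp hκ]; exact hραγ
        · rw [C.r_comp hσ']; exact hd1
        · rw [← C.comp_assoc hραγ hκ, ← C.comp_assoc hd1 hσ', ← hd2, ← hκe, ← hσe]
      refine ⟨D ε, ⟨ε, hεG, rfl⟩, C.comp (D ε) σ, C.mem_pTail_comp hσ', ?_⟩
      rw [← hcancel]
      exact C.mem_pTail_comp hκ
    obtain ⟨dd, ⟨ε, hεG, rfl⟩, ρ2, hρ2z, hρ2d⟩ :=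
      C.maximal_meets_exhaustive hfa hu hzmax (hGfin.image D) hexh
    obtain ⟨hργ, hγρy⟩ := hρ2z
    obtain ⟨hd1, hd2⟩ := hDspec ε hεG
    obtain ⟨θ, hθ, hθe⟩ := hρ2d
    refine ⟨ε, ⟨C.pTail_trans hαγδ ?_, C.pTail_trans hβγδ' ?_⟩, ?_⟩
    · exact (hGmem ε hεG).1
    · exact (hGmem ε hεG).2
    · -- ε ∈ αy
      refine ⟨C.comp γ ρ2, hγρy, ?_, ?_⟩
      · rw [C.r_comp hργ]; exact hαγ
      · have : C.comp α (C.comp γ ρ2) = C.comp ε θ := by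
          rw [← C.comp_assoc hαγ hργ, hθe, ← C.comp_assoc hd1 hθ, ← hd2]
        rw [this]
        apply C.mem_pTail_comp
        rw [hd2, C.s_comp hd1]; exact hθ
  set A := pMulStar C α y with hAdef
  set B := pMulStar C β y with hBdef
  have hdirD : pDirected C (A ∪ B) := by
    rintro p (hp | hp) q (hq | hq)
    · obtain ⟨w, hw⟩ := hA.2.1 p hp q hq
      exact ⟨w, ⟨hw.1, Or.inl hw.2⟩⟩
    · obtain ⟨w, ⟨h1, h2⟩, h3⟩ := mixed p hp q hq
      exact ⟨w, ⟨⟨h1, h2⟩, Or.inl h3⟩⟩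
    · obtain ⟨w, ⟨h1, h2⟩, h3⟩ := mixed q hq p hp
      exact ⟨w, ⟨⟨h2, h1⟩, Or.inl h3⟩⟩
    · obtain ⟨w, hw⟩ := hB.2.1 p hp q hq
      exact ⟨w, ⟨hw.1, Or.inr hw.2⟩⟩
  have hsubD : A ∪ B ⊆ pRng C (C.r α) := Set.union_subset hA.1 hB.1
  have h1 : A ∪ B = A := hA.2.2 _ hsubD hdirD Set.subset_union_left
  have h2 : A ∪ B = B := hB.2.2 _ hsubD hdirD Set.subset_union_right
  exact h1.symm.trans h2

end CategoryOfPaths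
end Aux4
section Aux5
variable {Λ : Type u}
namespace CategoryOfPaths
variable (C : CategoryOfPaths Λ)

lemma tailRing_mem_tail {w α : Λ} (h : C.r α = w) : pTail C α ∈ tailRing C w := by
  intro R hR
  exact hR.2 ⟨α, h, rfl⟩

lemma tailRing_empty {w : Λ} : (∅ : Set Λ) ∈ tailRing C w := by
  intro R hR
  exact hR.1.1.1

lemma tailRing_union {w : Λ} {E F : Set Λ} (hE : E ∈ tailRing C w)
    (hF : F ∈ tailRing C w) : E ∪ F ∈ tailRing C w := by
  intro R hR
  exact hR.1.1.2.1 E (hE R hR) F (hF R hR)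

lemma tailRing_diff {w : Λ} {E F : Set Λ} (hE : E ∈ tailRing C w)
    (hF : F ∈ tailRing C w) : E \ F ∈ tailRing C w := by
  intro R hR
  exact hR.1.1.2.2.2 E (hE R hR) F (hF R hR)

lemma tailRing_biUnion {w : Λ} {G : Set Λ} (hG : G.Finite) {f : Λ → Set Λ}
    (hf : ∀ g ∈ G, f g ∈ tailRing C w) : (⋃ g ∈ G, f g) ∈ tailRing C w := by
  refine @Set.Finite.induction_on Λ
    (fun s _ => (∀ g ∈ s, f g ∈ tailRing C w) → (⋃ g ∈ s, f g) ∈ tailRing C w) G hG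
    (fun _ => by simpa using C.tailRing_empty) ?_ hf
  intro a s ha hs ih hf'
  rw [Set.biUnion_insert]
  exact C.tailRing_union (hf' a (Set.mem_insert a s))
    (ih fun g hg => hf' g (Set.mem_insert_of_mem a hg))

/-- a boundary point has maximal points in all of its basic neighborhoods -/
lemma boundary_nbhd {v : Λ} (hv : C.r v = v) {x : Set Λ} (hx : x ∈ lamStar C v)
    (hb : (Sigma.mk (⟨v, hv⟩ : Vertex C) (⟨x, hx⟩ : Xv C v) : Xtotal C)
      ∈ boundarySet C)
    {E : Set Λ} (hE : E ∈ UC C v x) :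
    ∃ y, y ∈ lamStarStar C v ∧ y ∈ lamStar C v ∧ E ∈ UC C v y := by
  letI tv : ∀ w : Vertex C, TopologicalSpace (Xv C w.1) := fun w => XvTop C w.1
  letI tX : TopologicalSpace (Xtotal C) := XtotalTop C
  have vv : Vertex C := ⟨v, hv⟩
  have hUopen : @IsOpen _ (XvTop C v) {p : Xv C v | E ∈ UC C v p.1} :=
    TopologicalSpace.GenerateOpen.basic _ ⟨E, hE.1, rfl⟩
  have hOopen0 := @isOpenMap_sigmaMk (Vertex C) (fun w => Xv C w.1) tv ⟨v, hv⟩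
      {p : Xv C v | E ∈ UC C v p.1} hUopen
  have hOopen : IsOpen (@Sigma.mk (Vertex C) (fun w => Xv C w.1) (⟨v, hv⟩ : Vertex C) ''
      {p : Xv C v | E ∈ UC C v p.1}) := hOopen0
  have hmem : (Sigma.mk (⟨v, hv⟩ : Vertex C) (⟨x, hx⟩ : Xv C v) : Xtotal C) ∈
      Sigma.mk (⟨v, hv⟩ : Vertex C) '' {p : Xv C v | E ∈ UC C v p.1} :=
    ⟨⟨x, hx⟩, hE, rfl⟩
  have hclos : (Sigma.mk (⟨v, hv⟩ : Vertex C) (⟨x, hx⟩ : Xv C v) : Xtotal C) ∈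
      closure {p : Xtotal C | p.2.1 ∈ lamStarStar C p.1.1} := hb
  rw [mem_closure_iff] at hclos
  obtain ⟨q, hq1, hq2⟩ := hclos _ hOopen hmem
  obtain ⟨yv, hyvU, rfl⟩ := hq1
  exact ⟨yv.1, hq2, yv.2, hyvU⟩

end CategoryOfPaths
end Aux5
section Aux6
variable {Λ : Type u}
namespace CategoryOfPaths
variable (C : CategoryOfPaths Λ)

lemma forward_incl [Countable Λ] (hfa : FinitelyAligned C) {α β v : Λ}
    (hv : C.r v = v) (hsv : C.s α = v) (hβv : C.s β = v) (hr : C.r α = C.r β)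
    (hper : ∀ γ, C.s α = C.r γ →
      (pTail C (C.comp α γ) ∩ pTail C (C.comp β γ)).Nonempty)
    {x : Set Λ} (hx : x ∈ lamStar C v)
    (hb : (Sigma.mk (⟨v, hv⟩ : Vertex C) (⟨x, hx⟩ : Xv C v) : Xtotal C)
      ∈ boundarySet C) :
    pMulStar C α x ⊆ pMulStar C β x := by
  classical
  have hs : C.s α = C.s β := hsv.trans hβv.symm
  rintro δ ⟨γ, hγx, hγr, ht⟩
  by_contra hδB
  -- finite alignment of δ and β
  obtain ⟨G', hG'fin, hG'eq⟩ := hfa δ β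
  have hG'mem : ∀ ε ∈ G', ε ∈ pTail C δ ∩ pTail C β := by
    intro ε hε
    rw [hG'eq]
    exact Set.mem_biUnion hε (C.mem_pTail_self ε)
  set Dd : Λ → Λ := fun ε =>
    if h : ∃ b, C.s β = C.r b ∧ ε = C.comp β b then h.choose else ε with hDd
  have hDdspec : ∀ ε ∈ G', C.s β = C.r (Dd ε) ∧ ε = C.comp β (Dd ε) := by
    intro ε hε
    have h : ∃ b, C.s β = C.r b ∧ ε = C.comp β b := (hG'mem ε hε).2
    rw [hDd]
    simp only [dif_pos h]
    exact h.choose_spec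
  set F : Set Λ := ⋃ ε ∈ G', pTail C (Dd ε) with hF
  have hFring : F ∈ tailRing C v := by
    apply C.tailRing_biUnion hG'fin
    intro ε hε
    exact C.tailRing_mem_tail (by rw [← (hDdspec ε hε).1, ← hβv])
  -- x does not meet F
  have hxF : ∀ η ∈ x, η ∉ F := by
    intro η hηx hηF
    obtain ⟨ε, hεG, hηε⟩ := Set.mem_iUnion₂.mp hηF
    obtain ⟨hd1, hd2⟩ := hDdspec ε hεG
    obtain ⟨σ, hσ, hσe⟩ := hηε
    apply hδB
    refine ⟨η, hηx, ?_, ?_⟩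
    · rw [hβv]; exact (hx.2.1 hηx).symm
    · have hβη : C.comp β η ∈ pTail C ε := by
        rw [hσe, ← C.comp_assoc hd1 hσ, ← hd2]
        apply C.mem_pTail_comp
        rw [hd2, C.s_comp hd1]; exact hσ
      exact C.pTail_trans (hG'mem ε hεG).1 hβη
  have hrγ : C.r γ = v := by rw [← hγr, hsv]
  have hEring : pTail C γ \ F ∈ tailRing C v :=
    C.tailRing_diff (C.tailRing_mem_tail hrγ) hFring
  have hEUC : pTail C γ \ F ∈ UC C v x :=
    ⟨hEring, γ, hγx, fun η hη => ⟨hη.2, hxF η hη.1⟩⟩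
  -- get a maximal point in the neighborhood
  obtain ⟨y, hySS, hyS, hyUC⟩ := C.boundary_nbhd hv hx hb hEUC
  obtain ⟨_, a, hay, hsub2⟩ := hyUC
  have haE : a ∈ pTail C γ \ F := hsub2 ⟨hay, C.mem_pTail_self a⟩
  have hγy : γ ∈ y := C.maximal_hereditary hySS a hay γ haE.1
  -- y has equal products, yet separates δ
  have hySSα : y ∈ lamStarStar C (C.s α) := by rw [hsv]; exact hySS
  have hMeq := C.maximal_mulStar_eq hfa hs hr hper hySSα
  have hδA : δ ∈ pMulStar C α y := ⟨γ, hγy, hγr, ht⟩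
  rw [hMeq] at hδA
  obtain ⟨γ', hγ'y, hγ's, hb2⟩ := hδA
  -- γ' lies in F
  have hγ'F : γ' ∈ F := by
    have hβγ' : C.comp β γ' ∈ pTail C δ ∩ pTail C β :=
      ⟨hb2, C.mem_pTail_comp hγ's⟩
    rw [hG'eq] at hβγ'
    obtain ⟨ε, hεG, hε⟩ := Set.mem_iUnion₂.mp hβγ'
    obtain ⟨hd1, hd2⟩ := hDdspec ε hεG
    obtain ⟨σ, hσ, hσe⟩ := hε
    have hσ' : C.s (Dd ε) = C.r σ := by rw [← C.s_comp hd1, ← hd2]; exact hσ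
    have hcancel : γ' = C.comp (Dd ε) σ := by
      apply C.left_cancel (α := β) hγ's _ _
      · rw [C.r_comp hσ']; exact hd1
      · rw [← C.comp_assoc hd1 hσ', ← hd2, ← hσe]
    exact Set.mem_biUnion hεG (hcancel ▸ C.mem_pTail_comp hσ')
  -- contradiction with directedness of y
  obtain ⟨ξ, hξy, hξa, hξγ'⟩ := C.directed_pair hySS.2.1 hay hγ'y
  have hξE : ξ ∈ pTail C γ \ F := hsub2 ⟨hξy, hξa⟩
  apply hξE.2
  obtain ⟨ε, hεG, hγ'ε⟩ := Set.mem_iUnion₂.mp hγ'F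
  exact Set.mem_biUnion hεG (C.pTail_trans hγ'ε hξγ')

end CategoryOfPaths
end Aux6

/-- Lemma 8.8. `Λ` has `{α,β}`-periodicity iff `αx = βx` for
every `x ∈ s(α)∂Λ`. -/
theorem statement17 {Λ : Type u} [Countable Λ] (C : CategoryOfPaths Λ)
    (hfa : FinitelyAligned C) (α β : Λ) (hne : α ≠ β)
    (hs : C.s α = C.s β) (hr : C.r α = C.r β) :
    (∀ γ : Λ, C.s α = C.r γ → pMeets C (C.comp α γ) (C.comp β γ)) ↔
      ∀ (x : Set Λ) (hx : x ∈ lamStar C (C.s α)),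
        (Sigma.mk (⟨C.s α, C.r_s α⟩ : Vertex C) (⟨x, hx⟩ : Xv C (C.s α)) : Xtotal C)
            ∈ boundarySet C →
        pMulStar C α x = pMulStar C β x := by
  classical
  constructor
  · intro hper x hx hb
    apply Set.Subset.antisymm
    · exact C.forward_incl hfa (C.r_s α) rfl hs.symm hr hper hx hb
    · have hper' : ∀ γ, C.s β = C.r γ →
          (pTail C (C.comp β γ) ∩ pTail C (C.comp α γ)).Nonempty := by
        intro γ hγ
        rw [Set.inter_comm]
        exact hper γ (hs.trans hγ)
      exact C.forward_incl hfa (C.r_s α) hs.symm rfl hr.symm hper' hx hb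
  · intro hmul γ hγr
    have hrγ : C.r γ = C.s α := hγr.symm
    set P : Set (Set Λ) := {z | z ⊆ pRng C (C.s α) ∧ pDirected C z ∧ γ ∈ z} with hP
    have hseg : {δ | γ ∈ pTail C δ} ∈ P := by
      refine ⟨?_, ?_, C.mem_pTail_self γ⟩
      · intro δ hδ
        show C.r δ = C.s α
        rw [← C.r_eq_of_mem_pTail hδ, hrγ]
      · intro a ha b hb
        exact ⟨γ, ⟨⟨ha, hb⟩, C.mem_pTail_self γ⟩⟩
    have hZ : ∀ c ⊆ P, IsChain (· ⊆ ·) c → c.Nonempty →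
        ∃ ub ∈ P, ∀ s ∈ c, s ⊆ ub := by
      intro c hcP hchain hcne
      refine ⟨⋃₀ c, ⟨?_, ?_, ?_⟩, fun s hs => Set.subset_sUnion_of_mem hs⟩
      · rintro a ⟨z, hz, haz⟩
        exact (hcP hz).1 haz
      · rintro a ⟨z1, hz1, ha⟩ b ⟨z2, hz2, hb⟩
        rcases eq_or_ne z1 z2 with rfl | hne'
        · obtain ⟨w, hw, h1, h2⟩ := C.directed_pair (hcP hz1).2.1 ha hb
          exact ⟨w, ⟨⟨h1, h2⟩, z1, hz1, hw⟩⟩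
        · rcases hchain hz1 hz2 hne' with hle | hle
          · obtain ⟨w, hw, h1, h2⟩ := C.directed_pair (hcP hz2).2.1 (hle ha) hb
            exact ⟨w, ⟨⟨h1, h2⟩, z2, hz2, hw⟩⟩
          · obtain ⟨w, hw, h1, h2⟩ := C.directed_pair (hcP hz1).2.1 ha (hle hb)
            exact ⟨w, ⟨⟨h1, h2⟩, z1, hz1, hw⟩⟩
      · obtain ⟨z, hz⟩ := hcne
        exact ⟨z, hz, (hcP hz).2.2⟩
    obtain ⟨m, hsegm, hmmax⟩ := zorn_subset_nonempty P hZ _ hseg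
    have hγm : γ ∈ m := hmmax.prop.2.2
    have hmSS : m ∈ lamStarStar C (C.s α) := by
      refine ⟨hmmax.prop.1, hmmax.prop.2.1, ?_⟩
      intro y hy1 hy2 hy3
      exact Set.Subset.antisymm (hmmax.2 ⟨hy1, hy2, hy3 hγm⟩ hy3) hy3
    have hxm : m ∈ lamStar C (C.s α) :=
      ⟨⟨γ, hγm⟩, hmmax.prop.1, hmmax.prop.2.1, C.maximal_hereditary hmSS⟩
    have hbd : (Sigma.mk (⟨C.s α, C.r_s α⟩ : Vertex C)
        (⟨m, hxm⟩ : Xv C (C.s α)) : Xtotal C) ∈ boundarySet C := by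
      letI tv : ∀ w : Vertex C, TopologicalSpace (Xv C w.1) := fun w => XvTop C w.1
      letI tX : TopologicalSpace (Xtotal C) := XtotalTop C
      exact subset_closure (by exact hmSS)
    have hEq := hmul m hxm hbd
    have hαγ : C.comp α γ ∈ pMulStar C α m := ⟨γ, hγm, hγr, C.mem_pTail_self _⟩
    rw [hEq] at hαγ
    obtain ⟨γ', hγ'm, hγ's, hb2⟩ := hαγ
    obtain ⟨ξ, hξm, hξγ, hξγ'⟩ := C.directed_pair hmmax.prop.2.1 hγm hγ'm
    refine ⟨C.comp β ξ, ?_, ?_⟩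
    · exact C.pTail_trans hb2 (C.comp_tail_mono hγ's hξγ')
    · exact C.comp_tail_mono (by rw [← hs]; exact hγr) hξγ
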